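/- Let H be a complex Hilbert space, A, B : H → H bounded skew-adjoint operators, ψ₀ ∈ H with ‖ψ₀‖ = 1, and T ≥ 0 with T·(‖A‖ + ‖B‖) < 2. Let R_T be the set of all ψ(t) where 0 ≤ t ≤ T, u : ℝ → [0,1] is continuous, and ψ : ℝ → H is differentiable with ψ(0) = ψ₀ and ψ'(s) = A ψ(s) + u(s)·B ψ(s) for all s. Then −ψ₀ does not belong to the closure of R_T; in particular the closure of R_T is not the whole unit sphere of H. -/

import Mathlib

open ContinuousLinearMap Set
open scoped InnerProductSpace

/-- For a skew-adjoint operator, `re ⟪x, A x⟫ = 0`. -/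
lemma skew_re_inner_zero {H : Type*} [NormedAddCommGroup H] [InnerProductSpace ℂ H]
    [CompleteSpace H] (A : H →L[ℂ] H) (hA : ContinuousLinearMap.adjoint A = -A) (x : H) :
    Complex.re ⟪x, A x⟫_ℂ = 0 := by
  have h1 : ⟪x, A x⟫_ℂ = ⟪ContinuousLinearMap.adjoint A x, x⟫_ℂ :=
    (ContinuousLinearMap.adjoint_inner_left A x x).symm
  rw [hA] at h1
  simp only [ContinuousLinearMap.neg_apply, inner_neg_left] at h1
  have h2 : Complex.re ⟪A x, x⟫_ℂ = Complex.re ⟪x, A x⟫_ℂ := inner_re_symm (𝕜 := ℂ) _ _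
  have := congrArg Complex.re h1
  rw [Complex.neg_re, h2] at this
  linarith

/-- Positive minimal time for bounded drift: if `T·(‖A‖ + ‖B‖) < 2`, then the antipode
`−ψ₀` of the initial unit state is not in the closure of the set `R` of states reachable
within time `T` by solutions of `ψ' = (A + u(t)B)ψ` with continuous controls taking
values in `[0,1]`; in particular this closure is not the whole unit sphere. -/
theorem minimal_time_positive
    {H : Type*} [NormedAddCommGroup H] [InnerProductSpace ℂ H] [CompleteSpace H]
    (A B : H →L[ℂ] H) (hA : ContinuousLinearMap.adjoint A = -A)
    (hB : ContinuousLinearMap.adjoint B = -B)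
    (ψ₀ : H) (hψ₀ : ‖ψ₀‖ = 1) (T : ℝ) (hT : 0 ≤ T)
    (hsmall : T * (‖A‖ + ‖B‖) < 2)
    (R : Set H)
    (hR : R = {x : H | ∃ t : ℝ, 0 ≤ t ∧ t ≤ T ∧ ∃ u : ℝ → ℝ,
      Continuous u ∧ (∀ s : ℝ, u s ∈ Set.Icc (0:ℝ) 1) ∧ ∃ ψ : ℝ → H,
        ψ 0 = ψ₀ ∧ (∀ s : ℝ, HasDerivAt ψ (A (ψ s) + u s • B (ψ s)) s) ∧ ψ t = x}) :
    -ψ₀ ∉ closure R ∧ closure R ≠ Metric.sphere (0 : H) 1 := by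
  set C : ℝ := ‖A‖ + ‖B‖ with hC
  have hC0 : 0 ≤ C := by positivity
  -- Main bound: every point of R is within distance T*C of ψ₀
  have key : ∀ x ∈ R, ‖x - ψ₀‖ ≤ T * C := by
    rintro x hx
    rw [hR] at hx
    obtain ⟨t, ht0, htT, u, hu_cont, hu_mem, ψ, hψ0, hψ', hψt⟩ := hx
    -- norm preservation
    have hnorm : ∀ s : ℝ, ‖ψ s‖ = 1 := by
      have hderiv0 : ∀ s : ℝ, HasDerivAt (fun r => Complex.re ⟪ψ r, ψ r⟫_ℂ) 0 s := by
        intro s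
        have h1 : HasDerivAt (fun r => ⟪ψ r, ψ r⟫_ℂ)
            (⟪ψ s, A (ψ s) + u s • B (ψ s)⟫_ℂ + ⟪A (ψ s) + u s • B (ψ s), ψ s⟫_ℂ) s :=
          HasDerivAt.inner ℂ (hψ' s) (hψ' s)
        have h2 := (Complex.reCLM.hasFDerivAt.comp_hasDerivAt s h1)
        have hre : Complex.re (⟪ψ s, A (ψ s) + u s • B (ψ s)⟫_ℂ
            + ⟪A (ψ s) + u s • B (ψ s), ψ s⟫_ℂ) = 0 := by
          have e1 : Complex.re ⟪ψ s, A (ψ s) + u s • B (ψ s)⟫_ℂ = 0 := by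
            have hsm : u s • B (ψ s) = (u s : ℂ) • B (ψ s) :=
              RCLike.real_smul_eq_coe_smul (K := ℂ) _ _
            rw [inner_add_right, hsm, inner_smul_right]
            have hA0 := skew_re_inner_zero A hA (ψ s)
            have hB0 := skew_re_inner_zero B hB (ψ s)
            simp [Complex.add_re, Complex.mul_re, hA0, hB0]
          have e2 : Complex.re ⟪A (ψ s) + u s • B (ψ s), ψ s⟫_ℂ = 0 := by
            have h := inner_re_symm (𝕜 := ℂ) (ψ s) (A (ψ s) + u s • B (ψ s))
            rw [RCLike.re_to_complex, RCLike.re_to_complex] at h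
            rw [← h, e1]
          rw [Complex.add_re, e1, e2, add_zero]
        simpa only [Function.comp_def, Complex.reCLM_apply, hre] using h2
      have hconst : ∀ s : ℝ, Complex.re ⟪ψ s, ψ s⟫_ℂ = Complex.re ⟪ψ 0, ψ 0⟫_ℂ := by
        intro s
        exact is_const_of_deriv_eq_zero (fun r => (hderiv0 r).differentiableAt)
          (fun r => (hderiv0 r).deriv) s 0
      intro s
      have h1 : Complex.re ⟪ψ s, ψ s⟫_ℂ = ‖ψ s‖ ^ 2 := by
        simpa [RCLike.re_to_complex] using inner_self_eq_norm_sq (𝕜 := ℂ) (ψ s)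
      have h2 : Complex.re ⟪ψ 0, ψ 0⟫_ℂ = ‖ψ 0‖ ^ 2 := by
        simpa [RCLike.re_to_complex] using inner_self_eq_norm_sq (𝕜 := ℂ) (ψ 0)
      have := hconst s
      rw [h1, h2, hψ0, hψ₀] at this
      nlinarith [norm_nonneg (ψ s)]
    -- derivative bound
    have hbound : ∀ s : ℝ, ‖A (ψ s) + u s • B (ψ s)‖ ≤ C := by
      intro s
      obtain ⟨hu0, hu1⟩ := hu_mem s
      calc ‖A (ψ s) + u s • B (ψ s)‖ ≤ ‖A (ψ s)‖ + ‖u s • B (ψ s)‖ := norm_add_le _ _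
        _ ≤ ‖A‖ * ‖ψ s‖ + |u s| * (‖B‖ * ‖ψ s‖) := by
            rw [norm_smul, Real.norm_eq_abs]
            gcongr <;> [exact A.le_opNorm _; exact B.le_opNorm _]
        _ ≤ ‖A‖ + ‖B‖ := by
            rw [hnorm s]
            have : |u s| ≤ 1 := abs_le.2 ⟨by linarith, hu1⟩
            nlinarith [norm_nonneg A, norm_nonneg B]
    -- mean value bound on [0, t]
    have hmv := norm_image_sub_le_of_norm_deriv_le_segment'
      (f := ψ) (f' := fun s => A (ψ s) + u s • B (ψ s)) (a := 0) (b := t) (C := C)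
      (fun s _ => (hψ' s).hasDerivWithinAt) (fun s _ => hbound s) t
      (by exact ⟨ht0, le_refl t⟩)
    rw [hψt, hψ0, sub_zero] at hmv
    calc ‖x - ψ₀‖ ≤ C * t := hmv
      _ ≤ C * T := by nlinarith
      _ = T * C := mul_comm _ _
  -- conclude
  have hnot : -ψ₀ ∉ closure R := by
    intro hmem
    rw [Metric.mem_closure_iff] at hmem
    obtain ⟨y, hy, hdy⟩ := hmem (2 - T * C) (by linarith)
    have h1 : ‖y - ψ₀‖ ≤ T * C := key y hy
    have h2 : dist (-ψ₀) y = ‖y + ψ₀‖ := by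
      rw [dist_eq_norm]
      rw [show -ψ₀ - y = -(y + ψ₀) by abel, norm_neg]
    have h3 : (2 : ℝ) ≤ ‖y - ψ₀‖ + ‖y + ψ₀‖ := by
      have : ψ₀ + ψ₀ = (y + ψ₀) - (y - ψ₀) := by abel
      calc (2 : ℝ) = ‖ψ₀ + ψ₀‖ := by
            rw [show ψ₀ + ψ₀ = (2:ℂ) • ψ₀ by module, norm_smul, hψ₀]; simp
        _ = ‖(y + ψ₀) - (y - ψ₀)‖ := by rw [this]
        _ ≤ ‖y + ψ₀‖ + ‖y - ψ₀‖ := norm_sub_le _ _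
        _ = ‖y - ψ₀‖ + ‖y + ψ₀‖ := by ring
    rw [h2] at hdy
    linarith
  refine ⟨hnot, fun hEq => hnot ?_⟩
  rw [hEq]
  simp [hψ₀]
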